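/- Let G^1(V) be the Grassmannian of all hyperplanes of V (subspaces of dimension α and codimension 1), and let f : G^1(V) → G^1(V) be a bijection such that both f and f⁻¹ map every apartment of G^1(V) onto an apartment of G^1(V). Then for every 1-dimensional subspace P ⊆ V there exists a 1-dimensional subspace P' ⊆ V such that for every hyperplane X ∈ G^1(V): P ⊆ X if and only if P' ⊆ f(X). -/

import Mathlib

/- Setting: `V` is a left vector space over a division ring `K` whose dimension
`α = Module.rank K V` is an infinite cardinal. -/

universe u v w

section Defs

variable (K : Type u) (V : Type v) [DivisionRing K] [AddCommGroup V] [Module K V]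

/-- `B ⊆ V` is a basis of `V`, given as a set of vectors. -/
def IsBasisSet (B : Set V) : Prop :=
  LinearIndependent K ((↑) : B → V) ∧ Submodule.span K B = ⊤

/-- The Grassmannian `G_β(V)`: all subspaces of dimension `β` and codimension `α`. -/
def Gsub (β : Cardinal.{v}) : Set (Submodule K V) :=
  {X | Module.rank K ↥X = β ∧ Module.rank K (V ⧸ X) = Module.rank K V}

/-- The Grassmannian `G^β(V)`: all subspaces of dimension `α` and codimension `β`. -/
def Gsup (β : Cardinal.{v}) : Set (Submodule K V) :=
  {X | Module.rank K ↥X = Module.rank K V ∧ Module.rank K (V ⧸ X) = β}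

/-- The apartment of a Grassmannian `G` defined by a basis `B`:
all elements of `G` spanned by subsets of `B`. -/
def apartmentOf (G : Set (Submodule K V)) (B : Set V) : Set (Submodule K V) :=
  {X | X ∈ G ∧ ∃ S ⊆ B, X = Submodule.span K S}

end Defs

variable {K : Type u} {V : Type v} [DivisionRing K] [AddCommGroup V] [Module K V]

open Submodule Set Cardinal

noncomputable def IsBasisSet.toBasis {B : Set V} (hB : IsBasisSet K V B) : Module.Basis B K V :=
  Module.Basis.mk hB.1 (by rw [Subtype.range_coe]; exact le_of_eq hB.2.symm)

@[simp] lemma IsBasisSet.toBasis_apply {B : Set V} (hB : IsBasisSet K V B) (i : B) :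
    hB.toBasis i = (i : V) := by simp [IsBasisSet.toBasis]

lemma notMem_span_diff {B : Set V} (hB : IsBasisSet K V B) (i₀ : B) (x : V)
    (hx : hB.toBasis.repr x i₀ ≠ 0) : x ∉ Submodule.span K (B \ {(i₀ : V)}) := by
  intro hmem
  apply hx
  have hsub : B \ {(i₀ : V)} ⊆ (LinearMap.ker (hB.toBasis.coord i₀) : Set V) := by
    intro z hz
    have hzB : z ∈ B := hz.1
    have : hB.toBasis.repr z i₀ = 0 := by
      have h1 : hB.toBasis ⟨z, hzB⟩ = z := hB.toBasis_apply ⟨z, hzB⟩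
      classical
      have hne : (⟨z, hzB⟩ : B) ≠ i₀ := by
        intro h; exact hz.2 (by rw [← h]; exact rfl)
      rw [← h1, hB.toBasis.repr_self, Finsupp.single_apply, if_neg hne]
    simpa [LinearMap.mem_ker, Module.Basis.coord_apply] using this
  have := Submodule.span_le.mpr hsub hmem
  simpa [LinearMap.mem_ker, Module.Basis.coord_apply] using this

lemma self_notMem_span_diff {B : Set V} (hB : IsBasisSet K V B) {x : V} (hx : x ∈ B) :
    x ∉ Submodule.span K (B \ {x}) := by
  have hr : hB.toBasis.repr x ⟨x, hx⟩ ≠ 0 := by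
    have h1 : hB.toBasis ⟨x, hx⟩ = x := hB.toBasis_apply ⟨x, hx⟩
    have h2 : hB.toBasis.repr (hB.toBasis ⟨x, hx⟩) = Finsupp.single ⟨x, hx⟩ 1 :=
      hB.toBasis.repr_self _
    rw [h1] at h2
    rw [h2]
    simp
  simpa using notMem_span_diff hB ⟨x, hx⟩ x hr

lemma exists_notMem_span_diff {B : Set V} (hB : IsBasisSet K V B) {v : V} (hv : v ≠ 0) :
    ∃ x ∈ B, v ∉ Submodule.span K (B \ {x}) := by
  have hrepr : hB.toBasis.repr v ≠ 0 := by
    intro h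
    apply hv
    have := hB.toBasis.repr.injective (a₁ := v) (a₂ := 0) (by simp [h])
    exact this
  obtain ⟨i, hi⟩ : ∃ i, hB.toBasis.repr v i ≠ 0 := by
    by_contra h
    push_neg at h
    exact hrepr (Finsupp.ext h)
  exact ⟨(i : V), i.2, notMem_span_diff hB i v hi⟩

lemma card_basisSet {B : Set V} (hB : IsBasisSet K V B) : #B = Module.rank K V := by
  rw [← rank_top K V, ← hB.2]
  exact (rank_span_set hB.1).symm

lemma span_insert_self_sup {B : Set V} (hB : IsBasisSet K V B) {x : V} (hx : x ∈ B) :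
    Submodule.span K {x} ⊔ Submodule.span K (B \ {x}) = ⊤ := by
  rw [← Submodule.span_insert, Set.insert_diff_singleton, Set.insert_eq_of_mem hx, hB.2]

/-- rank of quotient by span of B minus x is 1 -/
lemma rank_quot_span_diff {B : Set V} (hB : IsBasisSet K V B) {x : V} (hx : x ∈ B) :
    Module.rank K (V ⧸ Submodule.span K (B \ {x})) = 1 := by
  set X := Submodule.span K (B \ {x}) with hX
  have hxX : x ∉ X := self_notMem_span_diff hB hx
  have hle : Module.rank K (V ⧸ X) ≤ 1 := by
    rw [rank_le_one_iff]
    refine ⟨X.mkQ x, fun q => ?_⟩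
    obtain ⟨z, rfl⟩ := X.mkQ_surjective q
    have hz : z ∈ Submodule.span K {x} ⊔ X := by
      rw [span_insert_self_sup hB hx]; trivial
    obtain ⟨z₁, hz₁, z₂, hz₂, rfl⟩ := Submodule.mem_sup.mp hz
    obtain ⟨c, rfl⟩ := Submodule.mem_span_singleton.mp hz₁
    refine ⟨c, ?_⟩
    have hz2 : X.mkQ z₂ = 0 := by
      rw [Submodule.mkQ_apply, Submodule.Quotient.mk_eq_zero]; exact hz₂
    rw [map_add, map_smul, hz2, add_zero]
  have hge : (1 : Cardinal) ≤ Module.rank K (V ⧸ X) := by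
    rw [Cardinal.one_le_iff_ne_zero]
    intro h0
    rw [rank_zero_iff] at h0
    have : X.mkQ x = 0 := Subsingleton.elim _ _
    exact hxX ((Submodule.Quotient.mk_eq_zero X).mp this)
  exact le_antisymm hle hge

lemma span_diff_mem_apartment (hα : Cardinal.aleph0 ≤ Module.rank K V)
    {B : Set V} (hB : IsBasisSet K V B) {x : V} (hx : x ∈ B) :
    Submodule.span K (B \ {x}) ∈ apartmentOf K V (Gsup K V 1) B := by
  refine ⟨⟨?_, rank_quot_span_diff hB hx⟩, B \ {x}, Set.diff_subset, rfl⟩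
  have hli : LinearIndependent K ((↑) : (B \ {x} : Set V) → V) :=
    LinearIndepOn.mono (v := id) hB.1 Set.diff_subset
  rw [rank_span_set hli]
  have hcard : #B = #(B \ {x} : Set V) + 1 := by
    have h1 : B = insert x (B \ {x}) := by
      rw [Set.insert_diff_singleton, Set.insert_eq_of_mem hx]
    have h2 : #(insert x (B \ {x}) : Set V) = #(B \ {x} : Set V) + 1 :=
      Cardinal.mk_insert (by simp)
    rw [← h1] at h2
    exact h2
  have hBcard : #B = Module.rank K V := card_basisSet hB
  have hinf : Cardinal.aleph0 ≤ #(B \ {x} : Set V) := by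
    by_contra h
    push_neg at h
    have hlt : #B < Cardinal.aleph0 := by
      rw [hcard]
      exact Cardinal.add_lt_aleph0 h Cardinal.one_lt_aleph0
    rw [hBcard] at hlt
    exact absurd hα (not_le.mpr hlt)
  rw [← hBcard, hcard, Cardinal.add_one_eq hinf]

/-- every vector decomposes as (elt of Y) + c • v' when Y is a hyperplane not containing v' -/
lemma hyperplane_decomp {Y : Submodule K V} (hY : Module.rank K (V ⧸ Y) = 1) {v' : V}
    (hv' : v' ∉ Y) (z : V) : ∃ c : K, z - c • v' ∈ Y := by
  have hle : Module.rank K (V ⧸ Y) ≤ 1 := le_of_eq hY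
  rw [rank_le_one_iff] at hle
  obtain ⟨q₀, hq₀⟩ := hle
  obtain ⟨r, hr⟩ := hq₀ (Y.mkQ v')
  have hrne : r ≠ 0 := by
    intro h
    rw [h, zero_smul] at hr
    exact hv' ((Submodule.Quotient.mk_eq_zero Y).mp (by rw [← Submodule.mkQ_apply, ← hr]))
  obtain ⟨s, hs⟩ := hq₀ (Y.mkQ z)
  refine ⟨s * r⁻¹, ?_⟩
  rw [← Submodule.Quotient.mk_eq_zero Y, Submodule.Quotient.mk_sub,
    Submodule.Quotient.mk_smul]
  have : (Submodule.Quotient.mk z : V ⧸ Y) = (s * r⁻¹) • (Submodule.Quotient.mk v') := by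
    have hq : q₀ = r⁻¹ • (Y.mkQ v') := by rw [← hr, smul_smul, inv_mul_cancel₀ hrne, one_smul]
    rw [← Submodule.mkQ_apply, ← hs, hq, smul_smul]
    rfl
  rw [this, sub_self]

lemma apartment_mem_elim {B : Set V} (hB : IsBasisSet K V B) {W : Submodule K V}
    (hW : W ∈ apartmentOf K V (Gsup K V 1) B) :
    ∃ x ∈ B, W = Submodule.span K (B \ {x}) := by
  obtain ⟨⟨hrk, hcork⟩, S, hSB, rfl⟩ := hW
  -- B \ S is nonempty
  have hne : (B \ S).Nonempty := by
    rw [Set.nonempty_iff_ne_empty]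
    intro h
    have hBS : B ⊆ S := by
      intro b hb
      by_contra hbS
      exact absurd h (Set.nonempty_iff_ne_empty.mp ⟨b, hb, hbS⟩)
    have hS : S = B := le_antisymm hSB hBS
    rw [hS, hB.2] at hcork
    have : Module.rank K (V ⧸ (⊤ : Submodule K V)) = 0 := by
      have : Subsingleton (V ⧸ (⊤ : Submodule K V)) := Submodule.Quotient.subsingleton_iff.mpr rfl
      exact rank_zero_iff.mpr this
    rw [this] at hcork
    exact one_ne_zero hcork.symm
  obtain ⟨x, hxB, hxS⟩ := hne
  refine ⟨x, hxB, ?_⟩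
  -- claim S = B \ {x}
  have hsub : S ⊆ B \ {x} := fun s hs => ⟨hSB hs, fun h => hxS (h ▸ hs)⟩
  -- suppose some y ∈ B \ S with y ≠ x; derive contradiction
  have hkey : ∀ y ∈ B, y ∉ S → y ∉ Submodule.span K S → False → True := fun _ _ _ _ _ => trivial
  have honeside : Submodule.span K S ≤ Submodule.span K (B \ {x}) := Submodule.span_mono hsub
  -- show B \ {x} ⊆ span S
  have hother : B \ {x} ⊆ (Submodule.span K S : Set V) := by
    intro y hy
    by_contra hyS
    -- y ∈ B, y ≠ x, y ∉ span S. Use rank of quotient = 1.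
    have hyB : y ∈ B := hy.1
    have hyx : y ≠ x := hy.2
    set X := Submodule.span K S with hX
    have hle : Module.rank K (V ⧸ X) ≤ 1 := le_of_eq hcork
    rw [rank_le_one_iff] at hle
    obtain ⟨q₀, hq₀⟩ := hle
    have hxX : x ∉ X := fun h => self_notMem_span_diff hB hxB (honeside h)
    obtain ⟨r, hr⟩ := hq₀ (X.mkQ x)
    obtain ⟨s, hs⟩ := hq₀ (X.mkQ y)
    have hrne : r ≠ 0 := by
      intro h; rw [h, zero_smul] at hr
      exact hxX ((Submodule.Quotient.mk_eq_zero X).mp (by rw [← Submodule.mkQ_apply, ← hr]))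
    have : y - (s * r⁻¹) • x ∈ X := by
      rw [← Submodule.Quotient.mk_eq_zero X, Submodule.Quotient.mk_sub,
        Submodule.Quotient.mk_smul]
      have hq : q₀ = r⁻¹ • (X.mkQ x) := by rw [← hr, smul_smul, inv_mul_cancel₀ hrne, one_smul]
      have : (Submodule.Quotient.mk y : V ⧸ X) = (s * r⁻¹) • (Submodule.Quotient.mk x) := by
        rw [← Submodule.mkQ_apply, ← hs, hq, smul_smul]; rfl
      rw [this, sub_self]
    -- then y ∈ span (B \ {y}), contradiction
    apply self_notMem_span_diff hB hyB
    have h1 : y - (s * r⁻¹) • x ∈ Submodule.span K (B \ {y}) := by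
      apply Submodule.span_mono (t := B \ {y}) _ this
      intro z hz
      exact ⟨hSB hz, fun h => hyS (h ▸ Submodule.subset_span hz)⟩
    have h2 : (s * r⁻¹) • x ∈ Submodule.span K (B \ {y}) :=
      Submodule.smul_mem _ _ (Submodule.subset_span ⟨hxB, fun h => hyx (h.symm)⟩)
    have := Submodule.add_mem _ h1 h2
    simpa using this
  exact le_antisymm honeside (Submodule.span_le.mpr hother)

/-- The swap-basis construction: given a basis set `B'` with `v' ∈ B'`, and a hyperplane `Y`
with `v' ∉ Y`, there is a basis `Bs` containing `v'` such that `span (Bs \ {v'}) = Y` and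
every other coordinate hyperplane of `Bs` is a coordinate hyperplane of `B'` (away from `v'`). -/
lemma exists_swap_basis {B' : Set V} (hB' : IsBasisSet K V B') {v' : V} (hv' : v' ∈ B')
    {Y : Submodule K V} (hYcork : ∀ z : V, ∃ c : K, z - c • v' ∈ Y) (hv'Y : v' ∉ Y) :
    ∃ Bs : Set V, IsBasisSet K V Bs ∧ v' ∈ Bs ∧
      Submodule.span K (Bs \ {v'}) = Y ∧
      (∀ xs ∈ Bs, xs ≠ v' →
        ∃ e ∈ B', e ≠ v' ∧ Submodule.span K (Bs \ {xs}) = Submodule.span K (B' \ {e})) := by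
  classical
  set b := hB'.toBasis with hb
  set t : V → K := fun z => Classical.choose (hYcork z) with ht
  have htspec : ∀ z : V, z - t z • v' ∈ Y := fun z => Classical.choose_spec (hYcork z)
  set F : B' → V := fun i => if (i : V) = v' then v' else (i : V) - t i • v' with hF
  set G : B' → V := fun i => if (i : V) = v' then v' else (i : V) + t i • v' with hG
  set Tl : V →ₗ[K] V := b.constr ℕ F with hTl
  set Sl : V →ₗ[K] V := b.constr ℕ G with hSl
  have hbv' : b ⟨v', hv'⟩ = v' := hB'.toBasis_apply _
  have hSv' : Sl v' = v' := by
    rw [← hbv', hSl, b.constr_basis]; simp [hG]; exact hbv'.symm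
  have hTv' : Tl v' = v' := by
    rw [← hbv', hTl, b.constr_basis]; simp [hF]; exact hbv'.symm
  have hST : Sl.comp Tl = LinearMap.id := by
    apply b.ext
    intro i
    by_cases hi : (i : V) = v'
    · have : b i = v' := by rw [hB'.toBasis_apply]; exact hi
      rw [LinearMap.comp_apply, this, hTv', hSv', LinearMap.id_apply]
    · rw [LinearMap.comp_apply, hTl, b.constr_basis]
      simp only [hF, if_neg hi]
      rw [map_sub, map_smul, hSv']
      have : Sl i = (i : V) + t i • v' := by
        have : (i : V) = b i := (hB'.toBasis_apply i).symm
        rw [this, hSl, b.constr_basis]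
        simp only [hG, hb, hB'.toBasis_apply, if_neg hi]
      rw [this, hB'.toBasis_apply, LinearMap.id_apply]
      abel
  have hTS : Tl.comp Sl = LinearMap.id := by
    apply b.ext
    intro i
    by_cases hi : (i : V) = v'
    · have : b i = v' := by rw [hB'.toBasis_apply]; exact hi
      rw [LinearMap.comp_apply, this, hSv', hTv', LinearMap.id_apply]
    · rw [LinearMap.comp_apply, hSl, b.constr_basis]
      simp only [hG, if_neg hi]
      rw [map_add, map_smul, hTv']
      have : Tl i = (i : V) - t i • v' := by
        have : (i : V) = b i := (hB'.toBasis_apply i).symm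
        rw [this, hTl, b.constr_basis]
        simp only [hF, hb, hB'.toBasis_apply, if_neg hi]
      rw [this, hB'.toBasis_apply, LinearMap.id_apply]
      abel
  set T : V ≃ₗ[K] V := LinearEquiv.ofLinear Tl Sl hTS hST with hT
  have hTapp : ∀ x ∈ B', (T : V → V) x = if x = v' then v' else x - t x • v' := by
    intro x hx
    have : (x : V) = b ⟨x, hx⟩ := (hB'.toBasis_apply ⟨x, hx⟩).symm
    show Tl x = _
    rw [this, hTl, b.constr_basis]
    simp only [hF, hb, hB'.toBasis_apply]
  have hTinj : Function.Injective (T : V → V) := T.injective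
  have hTv2 : (T : V → V) v' = v' := hTv'
  refine ⟨(T : V → V) '' B', ?_, ?_, ?_, ?_⟩
  · constructor
    · have h1 : LinearIndependent K (fun i : B' => (T : V → V) (i : V)) := by
        have := hB'.1.map' T.toLinearMap T.ker
        exact this
      have h2 := h1.linearIndepOn_id
      have h3 : Set.range (fun i : B' => (T : V → V) (i : V)) = (T : V → V) '' B' := by
        ext y
        simp [Set.mem_image]
      rw [h3] at h2
      exact h2
    · have : Submodule.span K ((T : V → V) '' B') = Submodule.map T.toLinearMap (Submodule.span K B') :=
        (Submodule.map_span T.toLinearMap B').symm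
      rw [this, hB'.2, Submodule.map_top]
      exact LinearEquiv.range T
  · exact ⟨v', hv', hTv2⟩
  · -- span (Bs \ {v'}) = Y
    have himg : (T : V → V) '' B' \ {v'} = (T : V → V) '' (B' \ {v'}) := by
      rw [Set.image_diff hTinj, Set.image_singleton, hTv2]
    rw [himg]
    have hle : Submodule.span K ((T : V → V) '' (B' \ {v'})) ≤ Y := by
      rw [Submodule.span_le]
      rintro z ⟨u, hu, rfl⟩
      rw [hTapp u hu.1, if_neg (by simpa using hu.2)]
      exact htspec u
    refine le_antisymm hle ?_
    intro y hy
    have hins : (T : V → V) '' B' = insert v' ((T : V → V) '' (B' \ {v'})) := by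
      conv_lhs => rw [← Set.insert_eq_of_mem hv', ← Set.insert_diff_singleton]
      rw [Set.image_insert_eq, hTv2]
    have htop : Submodule.span K ((T : V → V) '' B') = ⊤ := by
      have : Submodule.span K ((T : V → V) '' B') = Submodule.map T.toLinearMap (Submodule.span K B') :=
        (Submodule.map_span T.toLinearMap B').symm
      rw [this, hB'.2, Submodule.map_top]
      exact LinearEquiv.range T
    have hy2 : y ∈ Submodule.span K {v'} ⊔ Submodule.span K ((T : V → V) '' (B' \ {v'})) := by
      rw [← Submodule.span_insert, ← hins, htop]; trivial
    obtain ⟨z₁, hz₁, z₂, hz₂, rfl⟩ := Submodule.mem_sup.mp hy2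
    obtain ⟨c, rfl⟩ := Submodule.mem_span_singleton.mp hz₁
    have hcv : c • v' ∈ Y := by
      have : c • v' = (c • v' + z₂) - z₂ := by abel
      rw [this]
      exact Submodule.sub_mem Y hy (hle hz₂)
    have hc0 : c = 0 := by
      by_contra hc
      exact hv'Y (by simpa [smul_smul, inv_mul_cancel₀ hc] using Submodule.smul_mem Y c⁻¹ hcv)
    rw [hc0, zero_smul, zero_add]
    exact hz₂
  · -- other coordinate hyperplanes
    rintro xs ⟨x, hx, rfl⟩ hxs
    have hxv' : x ≠ v' := fun h => hxs (by rw [h, hTv2])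
    refine ⟨x, hx, hxv', ?_⟩
    have himg : (T : V → V) '' B' \ {(T : V → V) x} = (T : V → V) '' (B' \ {x}) := by
      rw [Set.image_diff hTinj, Set.image_singleton]
    rw [himg]
    have hv'mem : v' ∈ B' \ {x} := ⟨hv', fun h => hxv' (by
      simpa using h.symm)⟩
    apply le_antisymm
    · rw [Submodule.span_le]
      rintro z ⟨u, hu, rfl⟩
      by_cases huv : (u : V) = v'
      · rw [huv, hTv2]
        exact Submodule.subset_span hv'mem
      · rw [hTapp u hu.1, if_neg huv]
        exact Submodule.sub_mem _ (Submodule.subset_span hu)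
          (Submodule.smul_mem _ _ (Submodule.subset_span hv'mem))
    · rw [Submodule.span_le]
      intro u hu
      by_cases huv : u = v'
      · rw [huv]
        exact Submodule.subset_span ⟨v', hv'mem, hTv2⟩
      · have h1 : (T : V → V) u ∈ Submodule.span K ((T : V → V) '' (B' \ {x})) :=
          Submodule.subset_span ⟨u, hu, rfl⟩
        have h2 : v' ∈ Submodule.span K ((T : V → V) '' (B' \ {x})) :=
          Submodule.subset_span ⟨v', hv'mem, hTv2⟩
        have : u = (T : V → V) u + t u • v' := by
          rw [hTapp u hu.1, if_neg huv]; abel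
        rw [this]
        exact Submodule.add_mem _ h1 (Submodule.smul_mem _ _ h2)


/-- The key one-direction lemma: if `f` maps apartments onto apartments (and has a
one-sided inverse `g` also mapping apartments onto apartments), `B` is a basis with
`v ∈ B`, `B'` is the image basis and `v'` marks the image of the coordinate hyperplane
of `v`, then every hyperplane in `G^1` containing `v` is sent to one containing `v'`. -/
lemma key_one (hα : Cardinal.aleph0 ≤ Module.rank K V)
    {f g : Submodule K V → Submodule K V}
    (hmapsf : ∀ X ∈ Gsup K V 1, f X ∈ Gsup K V 1)
    (hgf : ∀ X ∈ Gsup K V 1, g (f X) = X)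
    (hg : ∀ B : Set V, IsBasisSet K V B → ∃ B' : Set V, IsBasisSet K V B' ∧
      g '' apartmentOf K V (Gsup K V 1) B = apartmentOf K V (Gsup K V 1) B')
    {B : Set V} (hB : IsBasisSet K V B) {v : V} (hv : v ∈ B)
    {B' : Set V} (hB' : IsBasisSet K V B')
    (hfA : f '' apartmentOf K V (Gsup K V 1) B = apartmentOf K V (Gsup K V 1) B')
    {v' : V} (hv' : v' ∈ B')
    (hfH : f (Submodule.span K (B \ {v})) = Submodule.span K (B' \ {v'})) :
    ∀ X ∈ Gsup K V 1, v ∈ X → v' ∈ f X := by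
  intro X hX hvX
  by_contra hv'Y
  set Y := f X with hYdef
  have hYG : Y ∈ Gsup K V 1 := hmapsf X hX
  obtain ⟨Bs, hBs, hv'Bs, hspanY, hother⟩ :=
    exists_swap_basis hB' hv' (fun z => hyperplane_decomp hYG.2 hv'Y z) hv'Y
  obtain ⟨Bt, hBt, hgA⟩ := hg Bs hBs
  have hvne : v ≠ 0 := hB.1.ne_zero ⟨v, hv⟩
  obtain ⟨bt, hbtBt, hvnot⟩ := exists_notMem_span_diff hBt hvne
  have hZ : Submodule.span K (Bt \ {bt}) ∈ apartmentOf K V (Gsup K V 1) Bt :=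
    span_diff_mem_apartment hα hBt hbtBt
  rw [← hgA] at hZ
  obtain ⟨W, hWapt, hgW⟩ := hZ
  obtain ⟨xs, hxsBs, hWeq⟩ := apartment_mem_elim hBs hWapt
  by_cases hxv : xs = v'
  · have hWY : W = Y := by rw [hWeq, hxv, hspanY]
    have hgWX : g W = X := by rw [hWY, hYdef]; exact hgf X hX
    rw [hgWX] at hgW
    exact hvnot (hgW ▸ hvX)
  · obtain ⟨e, heB', hev', hWeq2⟩ := hother xs hxsBs hxv
    have hWapt' : W ∈ apartmentOf K V (Gsup K V 1) B' := by
      rw [hWeq, hWeq2]; exact span_diff_mem_apartment hα hB' heB'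
    rw [← hfA] at hWapt'
    obtain ⟨U, hUapt, hfU⟩ := hWapt'
    obtain ⟨c, hcB, hUeq⟩ := apartment_mem_elim hB hUapt
    have hcv : c ≠ v := by
      intro h
      have h1 : W = Submodule.span K (B' \ {v'}) := by
        rw [← hfU, hUeq, h, hfH]
      have h2 : W = Submodule.span K (B' \ {e}) := by rw [hWeq, hWeq2]
      have he1 : e ∈ Submodule.span K (B' \ {v'}) :=
        Submodule.subset_span ⟨heB', by simpa using hev'⟩
      rw [← h1, h2] at he1
      exact self_notMem_span_diff hB' heB' he1
    have hvU : v ∈ U := by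
      rw [hUeq]
      exact Submodule.subset_span ⟨hv, by simpa using fun h => hcv h.symm⟩
    have hUG : U ∈ Gsup K V 1 := hUapt.1
    have hgWU : g W = U := by rw [← hfU]; exact hgf U hUG
    rw [hgWU] at hgW
    exact hvnot (hgW ▸ hvU)

/-- If two bases define the same apartment and the same coordinate hyperplane is marked
by `v` in the first and `w` in the second, then `w` is proportional to `v`. -/
lemma lines_eq (hα : Cardinal.aleph0 ≤ Module.rank K V)
    {B₁ B₂ : Set V} (h1 : IsBasisSet K V B₁) (h2 : IsBasisSet K V B₂)
    (hA : apartmentOf K V (Gsup K V 1) B₁ = apartmentOf K V (Gsup K V 1) B₂)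
    {v w : V} (hv : v ∈ B₁) (hw : w ∈ B₂)
    (hH : Submodule.span K (B₁ \ {v}) = Submodule.span K (B₂ \ {w})) :
    w ∈ Submodule.span K ({v} : Set V) := by
  classical
  have hsupp : ∀ j : B₁, (j : V) ≠ v → h1.toBasis.repr w j = 0 := by
    intro j hj
    by_contra hnz
    apply notMem_span_diff h1 j w hnz
    have hmem : Submodule.span K (B₁ \ {(j : V)}) ∈ apartmentOf K V (Gsup K V 1) B₂ := by
      rw [← hA]; exact span_diff_mem_apartment hα h1 j.2
    obtain ⟨u, huB₂, hueq⟩ := apartment_mem_elim h2 hmem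
    have huw : u ≠ w := by
      intro h
      rw [h, ← hH] at hueq
      have : (j : V) ∈ Submodule.span K (B₁ \ {v}) :=
        Submodule.subset_span ⟨j.2, by simpa using hj⟩
      rw [← hueq] at this
      exact self_notMem_span_diff h1 j.2 this
    rw [hueq]
    exact Submodule.subset_span ⟨hw, by simpa using fun h => huw h.symm⟩
  have : w ∈ Submodule.span K (h1.toBasis '' ({⟨v, hv⟩} : Set B₁)) := by
    rw [Module.Basis.mem_span_image]
    intro j hj
    have hj' : h1.toBasis.repr w j ≠ 0 := by simpa using hj
    have : (j : V) = v := by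
      by_contra h
      exact hj' (hsupp j h)
    simp only [Set.mem_singleton_iff]
    exact Subtype.ext this
  simpa using this

/-- The case `β = 1` of Theorem 1 for `G^1(V)`. -/
theorem stmt15 (hα : Cardinal.aleph0 ≤ Module.rank K V)
    (f g : Submodule K V → Submodule K V)
    (hbij : Set.BijOn f (Gsup K V 1) (Gsup K V 1))
    (hinv : Set.InvOn g f (Gsup K V 1) (Gsup K V 1))
    (hf : ∀ B : Set V, IsBasisSet K V B → ∃ B' : Set V, IsBasisSet K V B' ∧
      f '' apartmentOf K V (Gsup K V 1) B = apartmentOf K V (Gsup K V 1) B')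
    (hg : ∀ B : Set V, IsBasisSet K V B → ∃ B' : Set V, IsBasisSet K V B' ∧
      g '' apartmentOf K V (Gsup K V 1) B = apartmentOf K V (Gsup K V 1) B') :
    ∀ P : Submodule K V, Module.rank K ↥P = 1 →
      ∃ P' : Submodule K V, Module.rank K ↥P' = 1 ∧
        ∀ X ∈ Gsup K V 1, (P ≤ X ↔ P' ≤ f X) := by
  classical
  intro P hP
  -- pick a nonzero vector spanning P
  obtain ⟨v, hvP, hvne⟩ : ∃ v ∈ P, v ≠ 0 := by
    by_contra h
    push_neg at h
    have : P = ⊥ := by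
      rw [Submodule.eq_bot_iff]
      exact h
    rw [this] at hP
    rw [rank_bot] at hP
    exact zero_ne_one hP
  have hPspan : P = Submodule.span K ({v} : Set V) := by
    apply le_antisymm
    · intro w hw
      have hle : Module.rank K ↥P ≤ 1 := le_of_eq hP
      rw [rank_le_one_iff] at hle
      obtain ⟨p₀, hp₀⟩ := hle
      obtain ⟨r, hr⟩ := hp₀ ⟨v, hvP⟩
      have hrne : r ≠ 0 := by
        intro h
        rw [h, zero_smul] at hr
        exact hvne (by simpa using congrArg Subtype.val hr.symm)
      obtain ⟨s, hs⟩ := hp₀ ⟨w, hw⟩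
      have : w = (s * r⁻¹) • v := by
        have h1 : p₀ = r⁻¹ • (⟨v, hvP⟩ : ↥P) := by
          rw [← hr, smul_smul, inv_mul_cancel₀ hrne, one_smul]
        have h2 : (⟨w, hw⟩ : ↥P) = (s * r⁻¹) • (⟨v, hvP⟩ : ↥P) := by
          rw [← hs, h1, smul_smul]
        have := congrArg Subtype.val h2
        simpa using this
      rw [this]
      exact Submodule.smul_mem _ _ (Submodule.subset_span rfl)
    · rw [Submodule.span_le, Set.singleton_subset_iff]
      exact hvP
  -- extend {v} to a basis B
  obtain ⟨B, hvB, hBbasis⟩ : ∃ B : Set V, v ∈ B ∧ IsBasisSet K V B := by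
    have hli : LinearIndependent K ((↑) : ({v} : Set V) → V) :=
      linearIndependent_unique_iff.mpr (by simpa using hvne)
    obtain ⟨B, _, hB1, hB2, hB3⟩ := exists_linearIndepOn_id_extension (s := {v}) hli (Set.subset_univ _)
    refine ⟨B, hB1 rfl, hB3, ?_⟩
    rw [eq_top_iff]
    intro z _
    exact hB2 trivial
  -- image basis B' and marked vector v'
  obtain ⟨B', hB', hfA⟩ := hf B hBbasis
  have hHapt : Submodule.span K (B \ {v}) ∈ apartmentOf K V (Gsup K V 1) B :=
    span_diff_mem_apartment hα hBbasis hvB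
  have hfHapt : f (Submodule.span K (B \ {v})) ∈ apartmentOf K V (Gsup K V 1) B' := by
    rw [← hfA]; exact ⟨_, hHapt, rfl⟩
  obtain ⟨v', hv'B', hfH⟩ := apartment_mem_elim hB' hfHapt
  have hv'ne : v' ≠ 0 := hB'.1.ne_zero ⟨v', hv'B'⟩
  refine ⟨Submodule.span K ({v'} : Set V), ?_, ?_⟩
  · rw [rank_span_set (by
      refine linearIndependent_unique_iff.mpr ?_
      simpa using hv'ne)]
    simp
  intro X hX
  have hmapsg : ∀ Y ∈ Gsup K V 1, g Y ∈ Gsup K V 1 := by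
    intro Y hY
    obtain ⟨Z, hZ, rfl⟩ := hbij.surjOn hY
    rw [hinv.1 hZ]
    exact hZ
  constructor
  · intro hPX
    have hvX : v ∈ X := hPX hvP
    have := key_one hα (f := f) (g := g) hbij.mapsTo hinv.1 hg hBbasis hvB hB' hfA hv'B' hfH X hX hvX
    rw [Submodule.span_le, Set.singleton_subset_iff]
    exact this
  · intro hP'fX
    have hv'fX : v' ∈ f X := hP'fX (Submodule.subset_span rfl)
    -- apply key_one to g with basis B'
    obtain ⟨B'', hB'', hgA⟩ := hg B' hB'
    -- the apartment of B'' is the apartment of B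
    have hApts : apartmentOf K V (Gsup K V 1) B'' = apartmentOf K V (Gsup K V 1) B := by
      rw [← hgA, ← hfA]
      ext W
      constructor
      · rintro ⟨W₁, ⟨W₀, hW₀, rfl⟩, rfl⟩
        rw [hinv.1 hW₀.1]
        exact hW₀
      · intro hW
        exact ⟨f W, ⟨W, hW, rfl⟩, hinv.1 hW.1⟩
    -- marked vector for g(span(B' \ {v'})) in B''
    have hHapt'' : Submodule.span K (B \ {v}) ∈ apartmentOf K V (Gsup K V 1) B'' := by
      rw [hApts]; exact hHapt
    obtain ⟨w, hwB'', hgH⟩ := apartment_mem_elim hB'' hHapt''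
    have hgH' : g (Submodule.span K (B' \ {v'})) = Submodule.span K (B'' \ {w}) := by
      rw [← hfH, hinv.1 hHapt.1, hgH]
    have hkey := key_one hα (f := g) (g := f) hmapsg
      (fun Y hY => hinv.2 hY) hf hB' hv'B' hB'' hgA hwB'' hgH' (f X) (hbij.mapsTo hX) hv'fX
    -- hkey : w ∈ g (f X) = X
    rw [hinv.1 hX] at hkey
    -- w is proportional to v
    have hwv : w ∈ Submodule.span K ({v} : Set V) :=
      lines_eq hα hBbasis hB'' hApts.symm hvB hwB'' hgH
    obtain ⟨a, ha⟩ := Submodule.mem_span_singleton.mp hwv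
    have hane : a ≠ 0 := by
      intro h
      rw [h, zero_smul] at ha
      exact (hB''.1.ne_zero ⟨w, hwB''⟩) ha.symm
    have hvX : v ∈ X := by
      have : a⁻¹ • w ∈ X := Submodule.smul_mem _ _ hkey
      rwa [← ha, smul_smul, inv_mul_cancel₀ hane, one_smul] at this
    rw [hPspan, Submodule.span_le, Set.singleton_subset_iff]
    exact hvX
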